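/- Let F be a finite field of cardinality p^ℓ, 0 ≤ h < ℓ, λ ∈ F^× with λ^{1+p^h} ≠ 1. Galois p^h-self-dual 2-quasi λ-constacyclic codes over F of length 2n exist if and only if the polynomial X^{1+p^h} + 1 has a root in F. -/

import Mathlib

/-- The `λ`-constacyclic shift on `Fⁿ`. -/
def cshift {F : Type*} [Field F] {n : ℕ} [NeZero n] (lam : F) (a : Fin n → F) :
    Fin n → F :=
  fun i => (if i = 0 then lam else 1) * a (i - 1)

/-- The Galois inner product `⟨a,b⟩ = ∑ aᵢ bᵢ^e` on `Fⁿ × Fⁿ`, where `e = p^h`. -/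
def gin {F : Type*} [Field F] {n : ℕ} (e : ℕ)
    (a b : (Fin n → F) × (Fin n → F)) : F :=
  (∑ i, a.1 i * b.1 i ^ e) + (∑ i, a.2 i * b.2 i ^ e)

section aux

variable {F : Type*} [Field F] {n : ℕ} [NeZero n]

lemma cshift_smul (lam α : F) (a : Fin n → F) :
    cshift lam (α • a) = α • cshift lam a := by
  funext i
  simp only [cshift, Pi.smul_apply, smul_eq_mul]
  ring

lemma val_zero_sub_one : (((0 : Fin n) - 1)).val = n - 1 := by
  have hn := Nat.pos_of_ne_zero (NeZero.ne n)
  rw [Fin.sub_def]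
  simp only [Fin.val_zero, Fin.val_one', Nat.zero_add]
  rcases Nat.lt_or_ge 1 n with h | h
  · rw [Nat.mod_eq_of_lt h, Nat.mod_eq_of_lt (by omega)]
    omega
  · have : n = 1 := by omega
    subst this
    decide

lemma sum_cshift (e : ℕ) (lam : F) (a b : Fin n → F) :
    ∑ i, cshift lam a i * cshift lam b i ^ e
      = (∑ i, a i * b i ^ e)
        + (lam ^ (1 + e) - 1) * (a (0 - 1) * b (0 - 1) ^ e) := by
  have h1 : ∀ i : Fin n, cshift lam a i * cshift lam b i ^ e
      = a (i - 1) * b (i - 1) ^ e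
        + (if i = 0 then (lam ^ (1 + e) - 1) * (a (i - 1) * b (i - 1) ^ e) else 0) := by
    intro i
    by_cases hi : i = 0 <;>
      simp only [cshift, hi, if_true, if_false, mul_pow, pow_add, pow_one,
        one_mul, one_pow, add_zero] <;> ring
  rw [Finset.sum_congr rfl fun i _ => h1 i, Finset.sum_add_distrib]
  congr 1
  · exact Fintype.sum_equiv (Equiv.subRight (1 : Fin n)) _ _ (fun i => rfl)
  · rw [Finset.sum_ite_eq' Finset.univ (0 : Fin n)
      (fun i => (lam ^ (1 + e) - 1) * (a (i - 1) * b (i - 1) ^ e))]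
    simp

lemma gin_cshift (e : ℕ) (lam : F) (a b : (Fin n → F) × (Fin n → F)) :
    gin e (cshift lam a.1, cshift lam a.2) (cshift lam b.1, cshift lam b.2)
      = gin e a b + (lam ^ (1 + e) - 1)
          * (a.1 (0 - 1) * b.1 (0 - 1) ^ e + a.2 (0 - 1) * b.2 (0 - 1) ^ e) := by
  simp only [gin, sum_cshift]
  ring

end aux

theorem stmt_10 {F : Type*} [Field F] [Fintype F] {p ℓ h n : ℕ} [NeZero n]
    (hp : p.Prime) (hcard : Fintype.card F = p ^ ℓ) (hh : h < ℓ)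
    (lam : F) (hlam : lam ≠ 0) (hlam1 : lam ^ (1 + p ^ h) ≠ 1) :
    (∃ C : Submodule F ((Fin n → F) × (Fin n → F)),
      (∀ c ∈ C, (cshift lam c.1, cshift lam c.2) ∈ C) ∧
      (C : Set ((Fin n → F) × (Fin n → F))) = {a | ∀ c ∈ C, gin (p ^ h) c a = 0}) ↔
    ∃ α : F, α ^ (1 + p ^ h) + 1 = 0 := by
  set e := p ^ h with he
  have hepos : e ≠ 0 := pow_ne_zero _ hp.pos.ne'
  constructor
  · rintro ⟨C, hshift, hdual⟩
    have hd : ∀ a ∈ C, ∀ c ∈ C, gin e c a = 0 := by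
      intro a ha c hc
      exact (Set.ext_iff.mp hdual a).mp ha c hc
    have key : ∀ c ∈ C,
        c.1 (0 - 1) * c.1 (0 - 1) ^ e + c.2 (0 - 1) * c.2 (0 - 1) ^ e = 0 := by
      intro c hc
      have h1 : gin e c c = 0 := hd c hc c hc
      have hc' := hshift c hc
      have h2 : gin e (cshift lam c.1, cshift lam c.2)
          (cshift lam c.1, cshift lam c.2) = 0 := hd _ hc' _ hc'
      rw [gin_cshift, h1, zero_add] at h2
      have hne : lam ^ (1 + e) - 1 ≠ 0 := sub_ne_zero.mpr hlam1
      exact (mul_eq_zero.mp h2).resolve_left hne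
    have step : ∀ t : ℕ, ∀ j : Fin n, j.val + t = n - 1 → ∀ c ∈ C,
        c.1 j * c.1 j ^ e + c.2 j * c.2 j ^ e = 0 := by
      intro t
      induction t with
      | zero =>
        intro j hj c hc
        have hj' : j = (0 : Fin n) - 1 := by
          apply Fin.ext
          rw [val_zero_sub_one]
          omega
        rw [hj']
        exact key c hc
      | succ t ih =>
        intro j hj c hc
        have hn := Nat.pos_of_ne_zero (NeZero.ne n)
        have hlt : j.val + 1 < n := by omega
        have h1n : (1 : Fin n).val = 1 := by
          rw [Fin.val_one']
          exact Nat.mod_eq_of_lt (by omega)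
        have hval : (j + 1).val = j.val + 1 := by
          rw [Fin.val_add, h1n]
          exact Nat.mod_eq_of_lt hlt
        have hne0 : j + 1 ≠ 0 := by
          intro hcon
          rw [hcon, Fin.val_zero] at hval
          omega
        have := ih (j + 1) (by omega) (cshift lam c.1, cshift lam c.2) (hshift c hc)
        simpa [cshift, hne0, add_sub_cancel_right] using this
    have keyall : ∀ c ∈ C, ∀ j : Fin n,
        c.1 j * c.1 j ^ e + c.2 j * c.2 j ^ e = 0 := by
      intro c hc j
      exact step (n - 1 - j.val) j (by have := j.isLt; omega) c hc
    obtain ⟨c, hc, hc0⟩ : ∃ c ∈ C, c ≠ 0 := by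
      set a₀ : (Fin n → F) × (Fin n → F) := (fun _ => 1, fun _ => 0) with ha₀
      have ha₀0 : a₀ ≠ 0 := by
        intro hcon
        have : (1 : F) = 0 := congrFun (congrArg Prod.fst hcon) 0
        exact one_ne_zero this
      by_cases h0 : a₀ ∈ C
      · exact ⟨a₀, h0, ha₀0⟩
      · have hnot : ¬ ∀ c ∈ C, gin e c a₀ = 0 :=
          fun hall => h0 ((Set.ext_iff.mp hdual a₀).mpr hall)
        push_neg at hnot
        obtain ⟨c, hc, hgc⟩ := hnot
        refine ⟨c, hc, ?_⟩
        intro hcon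
        apply hgc
        rw [hcon]
        simp [gin]
    obtain ⟨j, hj⟩ : ∃ j : Fin n, c.1 j ≠ 0 ∨ c.2 j ≠ 0 := by
      by_contra hcon
      push_neg at hcon
      apply hc0
      refine Prod.ext ?_ ?_
      · funext i; exact (hcon i).1
      · funext i; exact (hcon i).2
    have K := keyall c hc j
    set u := c.1 j with hu
    set v := c.2 j with hv
    have hvne : v ≠ 0 := by
      intro hcon
      rw [hcon] at K
      simp only [zero_mul, zero_pow hepos, mul_zero, add_zero] at K
      have hu0 : u = 0 := by
        rcases mul_eq_zero.mp K with h' | h'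
        · exact h'
        · exact (pow_eq_zero_iff hepos).mp h'
      rcases hj with h' | h'
      · exact h' hu0
      · exact h' hcon
    refine ⟨u / v, ?_⟩
    rw [pow_add, pow_one, div_pow]
    field_simp
    linear_combination K
  · rintro ⟨α, hα⟩
    have hα0 : α ≠ 0 := by
      rintro rfl
      rw [zero_pow (by omega)] at hα
      simpa using hα
    have hα1 : α * α ^ e = -1 := by
      have h' := hα
      rw [pow_add, pow_one] at h'
      linear_combination h'
    haveI hchar : CharP F p := by
      have hq := ringChar.charP F
      obtain ⟨m, hqp, hcard'⟩ := FiniteField.card F (ringChar F)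
      have hpq : p = ringChar F := by
        have hd : p ∣ ringChar F ^ (m : ℕ) := by
          rw [← hcard', hcard]
          exact dvd_pow_self p (by omega : ℓ ≠ 0)
        exact (Nat.prime_dvd_prime_iff_eq hp hqp).mp (hp.dvd_of_dvd_pow hd)
      rw [hpq]
      exact hq
    haveI := Fact.mk hp
    have frobinj : Function.Injective (fun x : F => x ^ e) := by
      intro x y hxy
      simp only at hxy
      have hz : (x - y) ^ e = 0 := by
        rw [he, sub_pow_char_pow, ← he, hxy, sub_self]
      exact sub_eq_zero.mp ((pow_eq_zero_iff hepos).mp hz)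
    set f : ((Fin n → F) × (Fin n → F)) →ₗ[F] (Fin n → F) :=
      LinearMap.snd F (Fin n → F) (Fin n → F)
        - α • LinearMap.fst F (Fin n → F) (Fin n → F) with hf
    have hmem : ∀ x : (Fin n → F) × (Fin n → F),
        x ∈ LinearMap.ker f ↔ x.2 = α • x.1 := by
      intro x
      rw [LinearMap.mem_ker, hf]
      simp only [LinearMap.sub_apply, LinearMap.smul_apply, LinearMap.snd_apply,
        LinearMap.fst_apply, sub_eq_zero]
    refine ⟨LinearMap.ker f, ?_, ?_⟩
    · intro c hc
      rw [hmem] at hc ⊢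
      show cshift lam c.2 = α • cshift lam c.1
      rw [hc]
      exact cshift_smul lam α c.1
    · ext a
      simp only [SetLike.mem_coe, Set.mem_setOf_eq, hmem]
      constructor
      · intro ha c hc
        unfold gin
        rw [ha, hc]
        have hterm : ∀ i : Fin n, (α • c.1) i * ((α • a.1) i) ^ e
            = -(c.1 i * a.1 i ^ e) := by
          intro i
          simp only [Pi.smul_apply, smul_eq_mul, mul_pow]
          linear_combination (c.1 i * a.1 i ^ e) * hα1
        rw [Finset.sum_congr rfl fun i _ => hterm i, Finset.sum_neg_distrib,
          add_neg_cancel]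
      · intro H
        have hpoint : ∀ j : Fin n, a.2 j = α * a.1 j := by
          intro j
          have hg := H ((Pi.single j 1 : Fin n → F),
            α • (Pi.single j 1 : Fin n → F)) rfl
          unfold gin at hg
          simp only [Pi.smul_apply, smul_eq_mul, Pi.single_apply, ite_mul, mul_ite,
            one_mul, zero_mul, mul_zero, Finset.sum_ite_eq', Finset.mem_univ,
            if_true] at hg
          have hαe : α ^ e = -α⁻¹ := by
            field_simp
            linear_combination hα1
          have hinv : (α⁻¹) ^ e = -α := by
            rw [inv_pow, hαe, inv_neg, inv_inv]
          have h2 : a.1 j ^ e = (α⁻¹ * a.2 j) ^ e := by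
            rw [mul_pow, hinv]
            linear_combination hg
          have h3 := frobinj h2
          rw [h3, ← mul_assoc, mul_inv_cancel₀ hα0, one_mul]
        funext j
        simpa using hpoint j
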